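/- Let Q be a quiver and let (φ_a)_{a∈Q₁}, (ψ_a)_{a∈Q₁} be families of nonzero scalars, extended multiplicatively to walks (with φ_{a^{-1}} = φ_a^{-1}). Fix a complete set S of representatives of equivalence classes of simple cycles in Q. Then φ_S = ψ_S for all S ∈ S if and only if φ_C = ψ_C for all cycles C in Q. -/

import Mathlib

/-- A letter of the double quiver: an arrow together with an orientation
(`true` = the arrow itself, `false` = its formal inverse). -/
abbrev Letter (A : Type) := A × Bool

variable {V A : Type} (s t : A → V)

/-- Source of a letter of the double quiver. -/
def lsrc (l : Letter A) : V := if l.2 then s l.1 else t l.1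

/-- Target of a letter of the double quiver. -/
def ltgt (l : Letter A) : V := if l.2 then t l.1 else s l.1

/-- A walk in the quiver `(V, A, s, t)`, i.e. a path in the double quiver; the list
is written in order of traversal, i.e. `[l_1, l_2, …, l_n]` for the walk `l_n ⋯ l_1`. -/
def IsWalk (w : List (Letter A)) : Prop :=
  w.Chain' fun p q => ltgt s t p = lsrc s t q

/-- A cycle: a nonempty walk whose endpoint is its starting point. -/
def IsCycle (w : List (Letter A)) : Prop :=
  w ≠ [] ∧ IsWalk s t w ∧
    ∀ a ∈ w.head?, ∀ b ∈ w.getLast?, ltgt s t b = lsrc s t a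

/-- A simple cycle: a cycle whose sources are pairwise distinct. -/
def IsSimpleCycle (w : List (Letter A)) : Prop :=
  IsCycle s t w ∧ (w.map (lsrc s t)).Nodup

/-- The inverse of a walk. -/
def winv (w : List (Letter A)) : List (Letter A) :=
  (w.map fun l => (l.1, !l.2)).reverse

variable {k : Type} [Field k]

/-- The value `φ_w` of a family of nonzero scalars `(φ_a)_{a ∈ A}` on a walk `w`,
multiplicative on letters, with `φ_{a⁻¹} = φ_a⁻¹`. -/
def wval (φ : A → kˣ) (w : List (Letter A)) : kˣ :=
  (w.map fun l => if l.2 then φ l.1 else (φ l.1)⁻¹).prod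

/-- Equivalence of simple cycles: same length and one is a cyclic rotation of the
other or of its inverse. -/
def CycEquiv (w w' : List (Letter A)) : Prop :=
  w.length = w'.length ∧ ∃ c, w.rotate c = w' ∨ w.rotate c = winv w'

lemma wval_append (φ : A → kˣ) (u v : List (Letter A)) :
    wval φ (u ++ v) = wval φ u * wval φ v := by
  simp [wval]

lemma wval_rotate (φ : A → kˣ) (w : List (Letter A)) (n : ℕ) :
    wval φ (w.rotate n) = wval φ w := by
  unfold wval
  rw [List.map_rotate]
  generalize w.map _ = l
  rw [List.rotate_eq_drop_append_take_mod, List.prod_append, mul_comm,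
    ← List.prod_append, List.take_append_drop]

lemma wval_winv (φ : A → kˣ) (w : List (Letter A)) :
    wval φ (winv w) = (wval φ w)⁻¹ := by
  induction w with
  | nil => simp [winv, wval]
  | cons a w ih =>
    simp only [winv, List.map_cons, List.reverse_cons] at *
    rw [wval_append, ih]
    obtain ⟨a1, a2⟩ := a
    cases a2 <;> simp [wval, mul_inv, mul_comm]

lemma isCycle_rotate_one {w : List (Letter A)} (h : IsCycle s t w) :
    IsCycle s t (w.rotate 1) := by
  obtain ⟨hne, hw, hcl⟩ := h
  match w, hne, hw, hcl with
  | [a], _, hw, hcl => exact ⟨by simp, by simpa [IsWalk] using hw, by simpa using hcl⟩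
  | a :: b :: w, _, hw, hcl =>
    rw [List.rotate_cons_succ, List.rotate_zero]
    refine ⟨by simp, ?_, ?_⟩
    · rw [IsWalk, List.Chain', List.isChain_append]
      refine ⟨(List.isChain_cons.mp hw).2, List.isChain_singleton _, ?_⟩
      intro x hx y hy
      simp at hy
      subst hy
      exact hcl a rfl x (by simpa using hx)
    · intro x hx y hy
      simp at hx
      rw [show b :: w ++ [a] = (b :: w) ++ [a] from rfl, List.getLast?_concat] at hy
      simp at hy
      subst hx; subst hy
      exact (List.isChain_cons_cons.mp hw).1

lemma isCycle_rotate {w : List (Letter A)} (h : IsCycle s t w) (n : ℕ) :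
    IsCycle s t (w.rotate n) := by
  induction n with
  | zero => simpa
  | succ n ih => rw [← List.rotate_rotate] at *; exact isCycle_rotate_one s t ih

lemma isCycle_split {u v : List (Letter A)} (hu : u ≠ []) (hv : v ≠ [])
    (h : IsCycle s t (u ++ v))
    (hsrc : ∀ x ∈ u.head?, ∀ y ∈ v.head?, lsrc s t y = lsrc s t x) :
    IsCycle s t u ∧ IsCycle s t v := by
  obtain ⟨a, u', rfl⟩ := List.exists_cons_of_ne_nil hu
  obtain ⟨b, v', rfl⟩ := List.exists_cons_of_ne_nil hv
  obtain ⟨-, hw, hcl⟩ := h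
  rw [IsWalk, List.Chain', List.isChain_append] at hw
  obtain ⟨hwu, hwv, hmid⟩ := hw
  have hba : lsrc s t b = lsrc s t a := hsrc a rfl b rfl
  have hlast : ∀ y ∈ (b :: v').getLast?, ltgt s t y = lsrc s t a := by
    intro y hy
    refine hcl a rfl y ?_
    rwa [List.getLast?_append_of_ne_nil _ hv]
  refine ⟨⟨hu, hwu, ?_⟩, ⟨hv, hwv, ?_⟩⟩
  · intro x hx y hy
    simp only [List.head?_cons, Option.mem_some_iff] at hx
    subst hx
    rw [hmid y hy b rfl, hba]
  · intro x hx y hy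
    simp only [List.head?_cons, Option.mem_some_iff] at hx
    subst hx
    rw [hlast y hy, hba]

lemma key_lemma (φ ψ : A → kˣ) (𝒮 : Set (List (Letter A)))
    (h𝒮₂ : ∀ C, IsSimpleCycle s t C → ∃ S ∈ 𝒮, CycEquiv C S)
    (H : ∀ S ∈ 𝒮, wval φ S = wval ψ S) :
    ∀ n (C : List (Letter A)), C.length ≤ n → IsCycle s t C → wval φ C = wval ψ C := by
  intro n
  induction n with
  | zero =>
    intro C hC hcy
    exact absurd (List.length_eq_zero_iff.mp (Nat.le_zero.mp hC)) hcy.1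
  | succ n ih =>
    intro C hlen hcy
    by_cases hnd : (C.map (lsrc s t)).Nodup
    · obtain ⟨S, hS, -, c, hc | hc⟩ := h𝒮₂ C ⟨hcy, hnd⟩
      · rw [← wval_rotate φ C c, ← wval_rotate ψ C c, hc]
        exact H S hS
      · rw [← wval_rotate φ C c, ← wval_rotate ψ C c, hc, wval_winv, wval_winv,
          H S hS]
    · -- find a repeated source
      rw [List.nodup_iff_injective_get] at hnd
      simp only [Function.Injective, not_forall] at hnd
      obtain ⟨i, j, hget, hne⟩ := hnd
      -- reduce to i < j
      have main : ∀ i j : Fin (C.map (lsrc s t)).length, (i : ℕ) < j →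
          (C.map (lsrc s t)).get i = (C.map (lsrc s t)).get j →
          wval φ C = wval ψ C := by
        intro i j hij hget
        set L := C.length with hL
        have hLm : (C.map (lsrc s t)).length = L := by simp [hL]
        have hiL : (i : ℕ) < L := hLm ▸ i.2
        have hjL : (j : ℕ) < L := hLm ▸ j.2
        have hsrc : lsrc s t C[(i : ℕ)] = lsrc s t C[(j : ℕ)] := by
          simpa using hget
        set D := C.rotate i with hD
        have hDlen : D.length = L := by simp [hD, hL]
        have hDcy : IsCycle s t D := isCycle_rotate s t hcy i
        set m := (j : ℕ) - i with hm
        have hm0 : 0 < m := Nat.sub_pos_of_lt hij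
        have hmL : m < L := lt_of_le_of_lt (Nat.sub_le _ _) hjL
        have hsplit : D = D.take m ++ D.drop m := (List.take_append_drop m D).symm
        have hulen : (D.take m).length = m := by
          rw [List.length_take]; omega
        have hvlen : (D.drop m).length = L - m := by
          rw [List.length_drop, hDlen]
        have hu : D.take m ≠ [] := by
          intro h; rw [h] at hulen; simp at hulen; omega
        have hv : D.drop m ≠ [] := by
          intro h; rw [h] at hvlen; simp at hvlen; omega
        have hD0 : D[0]'(by omega) = C[(i : ℕ)] := by
          have h0 := List.getElem_rotate C i 0 (by rw [List.length_rotate]; omega)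
          exact h0.trans (getElem_congr_idx (by rw [Nat.zero_add]; exact Nat.mod_eq_of_lt (by omega)))
        have hDm : D[m]'(by omega) = C[(j : ℕ)] := by
          have h0 := List.getElem_rotate C i m (by rw [List.length_rotate]; omega)
          have he : (m + (i : ℕ)) % C.length = (j : ℕ) := by
            rw [hm, Nat.sub_add_cancel (le_of_lt hij)]
            exact Nat.mod_eq_of_lt (by omega)
          exact h0.trans (getElem_congr_idx he)
        have hsrc' : ∀ x ∈ (D.take m).head?, ∀ y ∈ (D.drop m).head?,
            lsrc s t y = lsrc s t x := by
          intro x hx y hy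
          rw [List.head?_eq_head hu] at hx
          rw [List.head?_eq_head hv] at hy
          simp only [Option.mem_some_iff] at hx hy
          have hxe : x = D[0]'(by omega) := by
            rw [← hx, List.head_eq_getElem, List.getElem_take]
          have hye : y = D[m]'(by omega) := by
            rw [← hy, List.head_eq_getElem, List.getElem_drop]
            exact getElem_congr_idx (by omega)
          rw [hxe, hye, hD0, hDm, hsrc]
        have hcys := isCycle_split s t hu hv (hsplit ▸ hDcy) hsrc'
        have h1 : wval φ (D.take m) = wval ψ (D.take m) :=
          ih _ (by rw [hulen]; omega) hcys.1
        have h2 : wval φ (D.drop m) = wval ψ (D.drop m) :=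
          ih _ (by rw [hvlen]; omega) hcys.2
        rw [← wval_rotate φ C i, ← wval_rotate ψ C i, ← hD, hsplit,
          wval_append, wval_append, h1, h2]
      rcases lt_or_gt_of_ne (fun h => hne (by exact_mod_cast Fin.ext h)) with h | h
      · exact main i j h hget
      · exact main j i h hget.symm

/- STATEMENT 4: if `𝒮` is a complete set of representatives of equivalence classes of
simple cycles, then `φ_S = ψ_S` for all `S ∈ 𝒮` iff `φ_C = ψ_C` for all cycles `C`. -/
theorem stmt_4 (φ ψ : A → kˣ) (𝒮 : Set (List (Letter A)))
    (h𝒮₁ : ∀ S ∈ 𝒮, IsSimpleCycle s t S)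
    (h𝒮₂ : ∀ C, IsSimpleCycle s t C → ∃ S ∈ 𝒮, CycEquiv C S)
    (h𝒮₃ : ∀ S ∈ 𝒮, ∀ S' ∈ 𝒮, CycEquiv S S' → S = S') :
    (∀ S ∈ 𝒮, wval φ S = wval ψ S) ↔
      (∀ C, IsCycle s t C → wval φ C = wval ψ C) := by
  constructor
  · intro H C hC
    exact key_lemma s t φ ψ 𝒮 h𝒮₂ H C.length C le_rfl hC
  · intro H S hS
    exact H S (h𝒮₁ S hS).1
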